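/- Let q ∈ ℂ ∖ {0, 1} and let a, b, c, d ∈ ℂ be pairwise distinct with (a − b)(c − d) = q·(b − c)(d − a), i.e. cross-ratio [a : b : c : d] = q. Set A = P(b, c), A′ = P(a, d), Â = P(b, a), Â′ = P(c, d). Then: (a) Â′·A = 0 = A′·Â, so in particular Â′·A = A′·Â; (b) A + q·Â′ = A′ + q·Â; and consequently, for every λ ∈ ℂ ∖ {0}, (I − (q/λ)·Â′)·(I − λ⁻¹·A) = (I − λ⁻¹·A′)·(I − (q/λ)·Â). (Taking a = z_{k,m+1}, b = z_{k,m}, c = z_{k+1,m}, d = z_{k+1,m+1} for a discrete conformal map z, this is the identity T̂^{λ/q}_{k+1,m} ∘ T^λ_{k,m} = T^λ_{k,m+1} ∘ T̂^{λ/q}_{k,m} which shows the trace-free holonomy evolves by conjugation: M^λ_{k,m+1} = T̂^{λ/q}_{k,m} ∘ M^λ_{k,m} ∘ (T̂^{λ/q}_{k,m})⁻¹.) -/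
import Mathlib


open Matrix

set_option maxHeartbeats 1000000

/-- For distinct `u w : ℂ`, `Pmat u w = (w − u)⁻¹ • [[w, −u·w], [1, −u]]` is the unique
idempotent 2×2 matrix with kernel spanned by `(u, 1)ᵀ` and image spanned by `(w, 1)ᵀ`. -/
noncomputable def Pmat (u w : ℂ) : Matrix (Fin 2) (Fin 2) ℂ :=
  (w - u)⁻¹ • !![w, -(u * w); 1, -u]

/-- If `a, b, c, d` are pairwise distinct with cross-ratio `[a : b : c : d] = q ∉ {0,1}`,
then with `A = P(b,c)`, `A′ = P(a,d)`, `Â = P(b,a)`, `Â′ = P(c,d)`: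
(a) `Â′·A = 0 = A′·Â`; (b) `A + q·Â′ = A′ + q·Â`; and consequently for every `λ ≠ 0`,
`(I − (q/λ)·Â′)·(I − λ⁻¹·A) = (I − λ⁻¹·A′)·(I − (q/λ)·Â)` — the identity
`T̂^{λ/q}_{k+1,m} ∘ T^λ_{k,m} = T^λ_{k,m+1} ∘ T̂^{λ/q}_{k,m}` showing the trace-free
holonomy evolves by conjugation. -/
theorem lax_compatibility (q a b c d : ℂ) (hq0 : q ≠ 0) (hq1 : q ≠ 1)
    (hab : a ≠ b) (hac : a ≠ c) (had : a ≠ d)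
    (hbc : b ≠ c) (hbd : b ≠ d) (hcd : c ≠ d)
    (hcr : (a - b) * (c - d) = q * ((b - c) * (d - a))) :
    (Pmat c d * Pmat b c = 0 ∧ Pmat a d * Pmat b a = 0) ∧
    (Pmat b c + q • Pmat c d = Pmat a d + q • Pmat b a) ∧
    (∀ lam : ℂ, lam ≠ 0 →
      ((1 : Matrix (Fin 2) (Fin 2) ℂ) - (q / lam) • Pmat c d) *
        ((1 : Matrix (Fin 2) (Fin 2) ℂ) - lam⁻¹ • Pmat b c) =
      ((1 : Matrix (Fin 2) (Fin 2) ℂ) - lam⁻¹ • Pmat a d) *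
        ((1 : Matrix (Fin 2) (Fin 2) ℂ) - (q / lam) • Pmat b a)) := by
  have hdc : d - c ≠ 0 := sub_ne_zero.mpr hcd.symm
  have hcb : c - b ≠ 0 := sub_ne_zero.mpr hbc.symm
  have hda : d - a ≠ 0 := sub_ne_zero.mpr had.symm
  have hba : a - b ≠ 0 := sub_ne_zero.mpr hab
  have h1 : Pmat c d * Pmat b c = 0 := by
    ext i j
    fin_cases i <;> fin_cases j <;>
      simp [Pmat, Matrix.mul_apply, Fin.sum_univ_two] <;>
      field_simp <;> ring
  have h2 : Pmat a d * Pmat b a = 0 := by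
    ext i j
    fin_cases i <;> fin_cases j <;>
      simp [Pmat, Matrix.mul_apply, Fin.sum_univ_two] <;>
      field_simp <;> ring
  have hbc' : b - c ≠ 0 := sub_ne_zero.mpr hbc
  have hq : q = (a - b) * (c - d) * ((b - c) * (d - a))⁻¹ := by
    field_simp
    linear_combination -hcr
  have h3 : Pmat b c + q • Pmat c d = Pmat a d + q • Pmat b a := by
    rw [hq]
    ext i j
    fin_cases i <;> fin_cases j <;>
      simp [Pmat, Matrix.add_apply, Matrix.smul_apply] <;>
      field_simp <;> ring
  refine ⟨⟨h1, h2⟩, h3, fun lam hlam => ?_⟩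
  have expand : ∀ X Y : Matrix (Fin 2) (Fin 2) ℂ,
      (1 - X) * (1 - Y) = 1 - (Y + X) + X * Y := by
    intro X Y; noncomm_ring
  have e1 : ((q / lam) • Pmat c d) * (lam⁻¹ • Pmat b c) = 0 := by
    rw [smul_mul_smul_comm, h1, smul_zero]
  have e2 : (lam⁻¹ • Pmat a d) * ((q / lam) • Pmat b a) = 0 := by
    rw [smul_mul_smul_comm, h2, smul_zero]
  have key : lam⁻¹ • Pmat b c + (q / lam) • Pmat c d
      = (q / lam) • Pmat b a + lam⁻¹ • Pmat a d := by
    have hql : (q / lam) = lam⁻¹ * q := by field_simp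
    rw [hql, mul_smul, mul_smul, ← smul_add, ← smul_add, h3, add_comm (Pmat a d)]
  rw [expand, expand, e1, e2, key]
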